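/- Let X be a real Banach space with an L-orthogonal sequence (x_n), let Z be a separable subspace of X, and let (F_n) be an increasing sequence of finite-dimensional subspaces of X whose union is dense in Z. Let (ε_n) be a sequence of positive reals converging to zero, and let (y_n) be a subsequence of (x_n) satisfying: for every n ∈ ℕ, every x ∈ F_n and every sequence (α_j)_{j>n} of nonnegative reals with ∑_{j=n+1}^∞ α_j = 1, one has (1 − ε_n)(1 + ‖x‖) ≤ ‖x + ∑_{j=n+1}^∞ α_j y_j‖. Then every element u of the bidual X** belonging to ⋂_n (weak*-closure of the convex hull of {ι(y_j) : j > n}) satisfies ‖ι(x) + u‖ = 1 + ‖x‖ for every x ∈ Z, where ι : X → X** is the canonical embedding. -/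

import Mathlib

set_option maxHeartbeats 1000000


open NormedSpace

/-- Let `X` be a real Banach space with an `L`-orthogonal sequence `(x n)`,
`Z` a separable subspace of `X`, `(F n)` an increasing sequence of finite-dimensional
subspaces of `X` whose union is dense in `Z`, `(ε n)` a sequence of positive reals converging
to zero, and `(x (φ n))` a subsequence satisfying the conclusion of Lemma `previmaure`
(Statement 4). Then every `u` in the bidual `X**` belonging, for every `n`, to the
weak*-closure of the convex hull of `{ι (x (φ j)) : j > n}` satisfies
`‖ι z + u‖ = 1 + ‖z‖` for every `z ∈ Z`. -/
theorem stmt5 (X : Type) [NormedAddCommGroup X] [NormedSpace ℝ X] [CompleteSpace X]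
    (x : ℕ → X) (hx : ∀ n, ‖x n‖ ≤ 1)
    (hL : ∀ z : X, Filter.Tendsto (fun n => ‖z + x n‖) Filter.atTop (nhds (1 + ‖z‖)))
    (Z : Subspace ℝ X) (hZsep : TopologicalSpace.IsSeparable (Z : Set X))
    (F : ℕ → Subspace ℝ X) (hmono : Monotone F) (hfd : ∀ n, FiniteDimensional ℝ (F n))
    (hdense : (Z : Set X) ⊆ closure (⋃ n, (F n : Set X)))
    (ε : ℕ → ℝ) (hεpos : ∀ n, 0 < ε n)
    (hε0 : Filter.Tendsto ε Filter.atTop (nhds 0))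
    (φ : ℕ → ℕ) (hφ : StrictMono φ)
    (hy : ∀ (n : ℕ) (z : X), z ∈ F n → ∀ α : ℕ → ℝ, (∀ j, 0 ≤ α j) → (∀ j ≤ n, α j = 0) →
      Summable α → (∑' j, α j) = 1 →
      (1 - ε n) * (1 + ‖z‖) ≤ ‖z + ∑' j, α j • x (φ j)‖)
    (u : StrongDual ℝ (StrongDual ℝ X))
    (hu : ∀ n : ℕ, StrongDual.toWeakDual u ∈
      closure (StrongDual.toWeakDual ''
        (convexHull ℝ ((fun j => inclusionInDoubleDual ℝ X (x (φ j))) '' {j | n < j})))) :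
    ∀ z ∈ Z, ‖inclusionInDoubleDual ℝ X z + u‖ = 1 + ‖z‖ := by
  classical
  set ι := inclusionInDoubleDual ℝ X with hιdef
  have hιnorm : ∀ z : X, ‖ι z‖ = ‖z‖ := fun z =>
    (inclusionInDoubleDualLi ℝ (E := X)).norm_map z
  have hyb : ∀ j : ℕ, ‖x (φ j)‖ ≤ 1 := fun j => hx (φ j)
  -- ‖u‖ ≤ 1
  have hu1 : ‖u‖ ≤ 1 := by
    apply ContinuousLinearMap.opNorm_le_bound _ zero_le_one
    intro g
    rw [one_mul]
    have hconv : convexHull ℝ ((fun j => ι (x (φ j))) '' {j | 0 < j})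
        ⊆ Metric.closedBall (0 : StrongDual ℝ (StrongDual ℝ X)) 1 := by
      refine convexHull_min ?_ (convex_closedBall (0 : StrongDual ℝ (StrongDual ℝ X)) 1)
      rintro _ ⟨j, hj, rfl⟩
      simpa [Metric.mem_closedBall, dist_zero_right (ι (x (φ j))), hιnorm] using hyb j
    have hmaps : Set.MapsTo (fun w : WeakDual ℝ (StrongDual ℝ X) => w g)
        (StrongDual.toWeakDual '' (convexHull ℝ ((fun j => ι (x (φ j))) '' {j | 0 < j})))
        {r : ℝ | ‖r‖ ≤ ‖g‖} := by
      rintro _ ⟨v, hv, rfl⟩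
      have hv1 : ‖v‖ ≤ 1 := by simpa [dist_zero_right v] using hconv hv
      calc ‖v g‖ ≤ ‖v‖ * ‖g‖ := v.le_opNorm g
        _ ≤ 1 * ‖g‖ := by gcongr
        _ = ‖g‖ := one_mul _
    have := map_mem_closure (WeakDual.eval_continuous g) (hu 0) hmaps
    rwa [IsClosed.closure_eq (isClosed_le continuous_norm continuous_const)] at this
  -- key lower bound
  have key : ∀ n : ℕ, ∀ z ∈ F n, (1 - ε n) * (1 + ‖z‖) ≤ ‖ι z + u‖ := by
    intro n z hz
    set c := (1 - ε n) * (1 + ‖z‖) with hc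
    rcases le_or_gt c 0 with hc0 | hc0
    · exact hc0.trans (norm_nonneg (ι z + u))
    -- Claim 1 : everything in the convex hull satisfies the norm lower bound
    have claim1 : ∀ w ∈ convexHull ℝ ((fun j => x (φ j)) '' {j | n < j}), c ≤ ‖z + w‖ := by
      set T : Set X := {w | ∃ α : ℕ → ℝ, (∀ j, 0 ≤ α j) ∧ (∀ j ≤ n, α j = 0) ∧
        Summable α ∧ (∑' j, α j) = 1 ∧ w = ∑' j, α j • x (φ j)} with hT
      have hsub : (fun j => x (φ j)) '' {j | n < j} ⊆ T := by
        rintro _ ⟨j, hj, rfl⟩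
        refine ⟨fun m => if m = j then 1 else 0, ?_, ?_, ?_, ?_, ?_⟩
        · intro m; dsimp only; split <;> norm_num
        · intro m hm
          have : m ≠ j := by
            intro h; subst h; exact absurd hj (by simpa using hm.not_gt)
          simp [this]
        · exact (hasSum_ite_eq j (1 : ℝ)).summable
        · exact tsum_ite_eq j (fun _ => (1 : ℝ))
        · rw [tsum_eq_single j (fun m hm => by simp [hm])]
          simp
      have hTconv : Convex ℝ T := by
        rintro w₁ ⟨α, hα0, hαn, hαs, hα1, rfl⟩ w₂ ⟨β, hβ0, hβn, hβs, hβ1, rfl⟩ a b ha hb hab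
        have hαy : Summable (fun m => α m • x (φ m)) := by
          apply Summable.of_norm_bounded hαs
          intro m
          rw [norm_smul, Real.norm_eq_abs, abs_of_nonneg (hα0 m)]
          calc α m * ‖x (φ m)‖ ≤ α m * 1 := mul_le_mul_of_nonneg_left (hyb m) (hα0 m)
            _ = α m := mul_one _
        have hβy : Summable (fun m => β m • x (φ m)) := by
          apply Summable.of_norm_bounded hβs
          intro m
          rw [norm_smul, Real.norm_eq_abs, abs_of_nonneg (hβ0 m)]
          calc β m * ‖x (φ m)‖ ≤ β m * 1 := mul_le_mul_of_nonneg_left (hyb m) (hβ0 m)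
            _ = β m := mul_one _
        refine ⟨fun m => a * α m + b * β m, ?_, ?_, ?_, ?_, ?_⟩
        · intro m
          exact add_nonneg (mul_nonneg ha (hα0 m)) (mul_nonneg hb (hβ0 m))
        · intro m hm; dsimp only; rw [hαn m hm, hβn m hm]; ring
        · exact (hαs.mul_left a).add (hβs.mul_left b)
        · rw [Summable.tsum_add (hαs.mul_left a) (hβs.mul_left b), tsum_mul_left, tsum_mul_left,
            hα1, hβ1]
          linarith
        · have : ∀ m, (a * α m + b * β m) • x (φ m)
              = a • (α m • x (φ m)) + b • (β m • x (φ m)) := by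
            intro m; rw [add_smul, smul_smul, smul_smul]
          rw [tsum_congr this, Summable.tsum_add (hαy.const_smul a) (hβy.const_smul b),
            Summable.tsum_const_smul a hαy, Summable.tsum_const_smul b hβy]
      intro w hw
      obtain ⟨α, hα0, hαn, hαs, hα1, rfl⟩ := convexHull_min hsub hTconv hw
      exact hy n z hz α hα0 hαn hαs hα1
    -- separation
    set A : Set X := (fun w => z + w) '' convexHull ℝ ((fun j => x (φ j)) '' {j | n < j})
      with hA
    have hAne : z + x (φ (n + 1)) ∈ A :=
      ⟨x (φ (n + 1)), subset_convexHull ℝ _ ⟨n + 1, by simp, rfl⟩, rfl⟩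
    have hdisj : Disjoint (Metric.ball (0 : X) c) A := by
      rw [Set.disjoint_left]
      rintro w hwb ⟨w', hw', rfl⟩
      have := claim1 w' hw'
      rw [Metric.mem_ball, dist_zero_right] at hwb
      linarith
    obtain ⟨f, r, hfs, hft⟩ := geometric_hahn_banach_open (convex_ball 0 c)
      Metric.isOpen_ball ((convex_convexHull ℝ _).translate z) hdisj
    have hr0 : 0 < r := by
      have h0 : (0 : X) ∈ Metric.ball (0 : X) c := by simpa using hc0
      simpa using hfs 0 h0
    -- bound : f b ≤ r on the closed ball of radius c
    have hball : ∀ b : X, ‖b‖ ≤ c → f b ≤ r := by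
      intro b hb
      by_contra hcon
      push_neg at hcon
      have hfb0 : 0 < f b := lt_trans hr0 hcon
      have hs1 : r / f b < 1 := (div_lt_one hfb0).2 hcon
      have hs0 : 0 < r / f b := div_pos hr0 hfb0
      have hmem : (r / f b) • b ∈ Metric.ball (0 : X) c := by
        rw [Metric.mem_ball, dist_zero_right, norm_smul, Real.norm_eq_abs,
          abs_of_pos hs0]
        calc r / f b * ‖b‖ ≤ r / f b * c := by nlinarith
          _ < 1 * c := by nlinarith
          _ = c := one_mul _
      have := hfs _ hmem
      rw [map_smul, smul_eq_mul, div_mul_cancel₀ _ (ne_of_gt hfb0)] at this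
      exact lt_irrefl r this
    have habs : ∀ b : X, ‖b‖ ≤ c → |f b| ≤ r := by
      intro b hb
      rw [abs_le]
      constructor
      · have := hball (-b) (by simpa using hb)
        rw [map_neg] at this; linarith
      · exact hball b hb
    -- c * ‖f‖ ≤ r
    have hfnorm : c * ‖f‖ ≤ r := by
      have : ‖f‖ ≤ r / c := by
        apply ContinuousLinearMap.opNorm_le_bound _ (div_nonneg hr0.le hc0.le)
        intro a
        rcases eq_or_ne a 0 with rfl | ha
        · simp [hr0.le]
        · have hna : 0 < ‖a‖ := norm_pos_iff.2 ha
          have hmem : ‖(c / ‖a‖) • a‖ ≤ c := by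
            rw [norm_smul, Real.norm_eq_abs, abs_of_pos (div_pos hc0 hna),
              div_mul_cancel₀ _ (ne_of_gt hna)]
          have h2 := habs _ hmem
          rw [map_smul, smul_eq_mul, abs_mul, abs_of_pos (div_pos hc0 hna)] at h2
          rw [div_mul_eq_mul_div, le_div_iff₀ hc0]
          calc ‖f a‖ * c = (c / ‖a‖ * |f a|) * ‖a‖ := by
                field_simp; exact Real.norm_eq_abs _
            _ ≤ r * ‖a‖ := by nlinarith
      calc c * ‖f‖ ≤ c * (r / c) := by nlinarith [this]
        _ = r := by field_simp
    -- u f ≥ r - f z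
    have huf : r - f z ≤ u f := by
      have hhalf : Convex ℝ {w : StrongDual ℝ (StrongDual ℝ X) | r - f z ≤ w f} := by
        apply convex_halfSpace_ge
        exact ⟨fun v w => rfl, fun s v => rfl⟩
      have hsub2 : (fun j => ι (x (φ j))) '' {j | n < j}
          ⊆ {w : StrongDual ℝ (StrongDual ℝ X) | r - f z ≤ w f} := by
        rintro _ ⟨j, hj, rfl⟩
        have hmemA : z + x (φ j) ∈ A :=
          ⟨x (φ j), subset_convexHull ℝ _ ⟨j, hj, rfl⟩, rfl⟩
        have := hft _ hmemA
        rw [map_add] at this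
        simp only [Set.mem_setOf_eq]
        rw [hιdef, dual_def]
        linarith
      have hmaps : Set.MapsTo (fun w : WeakDual ℝ (StrongDual ℝ X) => w f)
          (StrongDual.toWeakDual '' (convexHull ℝ ((fun j => ι (x (φ j))) '' {j | n < j})))
          (Set.Ici (r - f z)) := by
        rintro _ ⟨v, hv, rfl⟩
        exact convexHull_min hsub2 hhalf hv
      have := map_mem_closure (WeakDual.eval_continuous f) (hu n) hmaps
      rwa [IsClosed.closure_eq isClosed_Ici, Set.mem_Ici] at this
    -- conclude
    have hfne : 0 < ‖f‖ := by
      rcases le_or_gt ‖f‖ 0 with hf0 | hf0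
      · exfalso
        have : f = 0 := norm_le_zero_iff.mp hf0
        have h1 := hft _ hAne
        rw [this] at h1
        simp at h1
        linarith
      · exact hf0
    have heval : c * ‖f‖ ≤ (ι z + u) f := by
      have : (ι z + u) f = f z + u f := by
        rw [ContinuousLinearMap.add_apply, hιdef, dual_def]
      rw [this]
      linarith
    have := (ι z + u).le_opNorm f
    have h2 : c * ‖f‖ ≤ ‖ι z + u‖ * ‖f‖ := by
      calc c * ‖f‖ ≤ (ι z + u) f := heval
        _ ≤ ‖(ι z + u) f‖ := le_abs_self _
        _ ≤ ‖ι z + u‖ * ‖f‖ := this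
    exact le_of_mul_le_mul_right h2 hfne
  -- equality on the union
  have hUnion : ∀ z ∈ ⋃ n, (F n : Set X), ‖ι z + u‖ = 1 + ‖z‖ := by
    intro z hz
    obtain ⟨m, hzm⟩ := Set.mem_iUnion.1 hz
    have hle : ‖ι z + u‖ ≤ 1 + ‖z‖ := by
      calc ‖ι z + u‖ ≤ ‖ι z‖ + ‖u‖ := norm_add_le (ι z) u
        _ ≤ ‖z‖ + 1 := add_le_add (le_of_eq (hιnorm z)) hu1
        _ = 1 + ‖z‖ := add_comm _ _
    have hge : 1 + ‖z‖ ≤ ‖ι z + u‖ := by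
      have hev : ∀ᶠ n in Filter.atTop, (1 - ε n) * (1 + ‖z‖) ≤ ‖ι z + u‖ :=
        Filter.eventually_atTop.2 ⟨m, fun n hn => key n z (hmono hn hzm)⟩
      have ht : Filter.Tendsto (fun n => (1 - ε n) * (1 + ‖z‖)) Filter.atTop
          (nhds (1 + ‖z‖)) := by
        have := ((tendsto_const_nhds (x := (1 : ℝ)) (f := Filter.atTop)).sub hε0).mul_const
          (1 + ‖z‖)
        simpa using this
      exact le_of_tendsto ht hev
    linarith
  intro z hz
  have hzc : z ∈ closure (⋃ n, (F n : Set X)) := hdense hz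
  have hcl : IsClosed {w : X | ‖ι w + u‖ = 1 + ‖w‖} := by
    apply isClosed_eq
    · exact (Continuous.norm (f := fun w => ι w + u) (ι.continuous.add continuous_const))
    · exact continuous_const.add continuous_norm
  exact closure_minimal (fun w hw => hUnion w hw) hcl hzc
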